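/- Under the threshold model P(Y > y) = F(α(θ - δ(y))) with δ a strictly increasing bijection onto ℝ and F a continuous strictly increasing cdf with finite mean μ_F, the expectation of the transformed variable satisfies E(δ(Y)) = θ - μ_F/α. -/

import Mathlib

open MeasureTheory Set
open Filter Topology

/-- Under the threshold model `P(Y > y) = F (α (θ - d y))`, one has
`E (d Y) = θ - μF / α`, where `μF` is the mean of the distribution `F`. -/
theorem mean_transformed (Ω : Type*) [MeasurableSpace Ω] (μ : Measure Ω)
    [IsProbabilityMeasure μ] (Y : Ω → ℝ) (hY : Measurable Y)
    (Ω₀ : Type*) [MeasurableSpace Ω₀] (μ₀ : Measure Ω₀) [IsProbabilityMeasure μ₀]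
    (Y₀ : Ω₀ → ℝ) (hY₀ : Measurable Y₀) (hY₀int : Integrable Y₀ μ₀)
    (F : ℝ → ℝ) (hFc : Continuous F) (hFm : StrictMono F)
    (hFrange : ∀ x, F x ∈ Ioo (0 : ℝ) 1)
    (hF : ∀ x, (μ₀ {ω | Y₀ ω ≤ x}).toReal = F x)
    (μF : ℝ) (hμF : μF = ∫ ω, Y₀ ω ∂μ₀)
    (S : Set ℝ) (hSopen : IsOpen S) (hSconn : S.OrdConnected)
    (d : ℝ → ℝ) (hd : StrictMonoOn d S) (hdc : ContinuousOn d S) (hdS : d '' S = univ)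
    (α θ : ℝ) (hα : 0 < α)
    (hYS : ∀ ω, Y ω ∈ S)
    (hsurv : ∀ y ∈ S, (μ {ω | y < Y ω}).toReal = F (α * (θ - d y)))
    (hint : Integrable (fun ω => d (Y ω)) μ) :
    ∫ ω, d (Y ω) ∂μ = θ - μF / α := by
  set Z : Ω → ℝ := fun ω => d (Y ω) with hZdef
  set Z₀ : Ω₀ → ℝ := fun ω => θ - Y₀ ω / α with hZ₀def
  have hZae : AEMeasurable Z μ := hint.aemeasurable
  have hZ₀m : Measurable Z₀ := measurable_const.sub (hY₀.div_const α)
  -- CDF values as ENNReal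
  have hle : ∀ t, μ₀ {ω | Y₀ ω ≤ t} = ENNReal.ofReal (F t) := by
    intro t
    rw [← hF t, ENNReal.ofReal_toReal (measure_ne_top _ _)]
  -- no atoms: strict version
  have hIio : ∀ x, μ₀ {ω | Y₀ ω < x} = ENNReal.ofReal (F x) := by
    intro x
    refine le_antisymm ?_ ?_
    · rw [← hle x]
      refine measure_mono fun ω hω => ?_
      exact le_of_lt (show Y₀ ω < x from hω)
    · have htend : Tendsto (fun n : ℕ => ENNReal.ofReal (F (x - 1 / (n + 1)))) atTop
          (𝓝 (ENNReal.ofReal (F x))) := by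
        have h1 : Tendsto (fun n : ℕ => x - 1 / ((n : ℝ) + 1)) atTop (𝓝 (x - 0)) :=
          tendsto_const_nhds.sub tendsto_one_div_add_atTop_nhds_zero_nat
        rw [sub_zero] at h1
        exact (ENNReal.continuous_ofReal.tendsto _).comp ((hFc.tendsto x).comp h1)
      refine le_of_tendsto htend (Filter.Eventually.of_forall fun n => ?_)
      rw [← hle]
      refine measure_mono fun ω hω => ?_
      have h0 : (0:ℝ) < 1 / ((n:ℝ) + 1) := by positivity
      have hω' : Y₀ ω ≤ x - 1 / ((n:ℝ) + 1) := hω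
      show Y₀ ω < x
      linarith
  -- the two pushforward measures agree
  have hmapeq : μ.map Z = μ₀.map Z₀ := by
    haveI : IsProbabilityMeasure (μ.map Z) := Measure.isProbabilityMeasure_map hZae
    haveI : IsProbabilityMeasure (μ₀.map Z₀) := Measure.isProbabilityMeasure_map hZ₀m.aemeasurable
    refine Measure.ext_of_Iic _ _ fun z => ?_
    obtain ⟨y, hyS, hyz⟩ : ∃ y ∈ S, d y = z := by
      have : z ∈ d '' S := by rw [hdS]; exact mem_univ z
      obtain ⟨y, hyS, hyz⟩ := this
      exact ⟨y, hyS, hyz⟩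
    have hsetZ : Z ⁻¹' Iic z = {ω | y < Y ω}ᶜ := by
      ext ω
      simp only [mem_preimage, mem_Iic, mem_compl_iff, mem_setOf_eq, not_lt, hZdef]
      rw [← hyz, ← hd.le_iff_le (hYS ω) hyS]
    have hsetZ₀ : Z₀ ⁻¹' Iic z = {ω | Y₀ ω < α * (θ - z)}ᶜ := by
      ext ω
      simp only [mem_preimage, mem_Iic, mem_compl_iff, mem_setOf_eq, not_lt, hZ₀def]
      rw [sub_le_iff_le_add, ← sub_le_iff_le_add', le_div_iff₀ hα, mul_comm]
    have hm1 : MeasurableSet {ω | y < Y ω} := measurableSet_lt measurable_const hY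
    have hm2 : MeasurableSet {ω | Y₀ ω < α * (θ - z)} := measurableSet_lt hY₀ measurable_const
    rw [Measure.map_apply₀ hZae measurableSet_Iic.nullMeasurableSet,
      Measure.map_apply hZ₀m measurableSet_Iic, hsetZ, hsetZ₀,
      measure_compl hm1 (measure_ne_top _ _),
      measure_compl hm2 (measure_ne_top _ _), measure_univ, measure_univ]
    congr 1
    rw [hIio]
    rw [← hyz, ← hsurv y hyS, ENNReal.ofReal_toReal (measure_ne_top _ _)]
  -- compute the integral
  calc ∫ ω, d (Y ω) ∂μ = ∫ x, id x ∂(μ.map Z) := (integral_map hZae aestronglyMeasurable_id).symm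
    _ = ∫ x, id x ∂(μ₀.map Z₀) := by rw [hmapeq]
    _ = ∫ ω, (θ - Y₀ ω / α) ∂μ₀ := integral_map hZ₀m.aemeasurable aestronglyMeasurable_id
    _ = θ - μF / α := by
        have h3 : ∫ ω, (θ - Y₀ ω / α) ∂μ₀ = (∫ _ω, θ ∂μ₀) - ∫ ω, Y₀ ω / α ∂μ₀ :=
          integral_sub (integrable_const θ) (hY₀int.div_const α)
        rw [h3, integral_const, integral_div, probReal_univ, one_smul, hμF]
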